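/- For r ∈ (0,1), the integral ∫₁^∞ (√r · √(x²−1)) / (√(1−r²) · √x · (x²−r²)) dx converges and equals √π (√r/√(1−r²)) (Γ(5/4)/Γ(7/4)) ₂F₁(1/4,1,7/4;r²). -/

import Mathlib

open MeasureTheory

open Set in
private lemma realBeta {a b : ℝ} (ha : 0 < a) (hb : 0 < b) :
    ∫ y in (0:ℝ)..1, y ^ (a-1) * (1-y) ^ (b-1) =
      Real.Gamma a * Real.Gamma b / Real.Gamma (a+b) := by
  have h := Complex.Gamma_mul_Gamma_eq_betaIntegral (s := (a:ℂ)) (t := (b:ℂ))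
    (by simpa using ha) (by simpa using hb)
  have hbeta : Complex.betaIntegral a b =
      ((∫ y in (0:ℝ)..1, y ^ (a-1) * (1-y) ^ (b-1) : ℝ) : ℂ) := by
    rw [Complex.betaIntegral, ← intervalIntegral.integral_ofReal]
    apply intervalIntegral.integral_congr
    intro x hx
    rw [uIcc_of_le zero_le_one] at hx
    simp only []
    rw [Complex.ofReal_mul, Complex.ofReal_cpow hx.1,
      Complex.ofReal_cpow (by linarith [hx.2] : (0:ℝ) ≤ 1 - x)]
    push_cast
    ring
  rw [hbeta, ← Complex.ofReal_add, Complex.Gamma_ofReal, Complex.Gamma_ofReal,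
    Complex.Gamma_ofReal, ← Complex.ofReal_mul, ← Complex.ofReal_mul] at h
  have h2 := Complex.ofReal_inj.mp h
  have hG : Real.Gamma (a+b) ≠ 0 := (Real.Gamma_pos_of_pos (by linarith)).ne'
  field_simp
  linarith [h2]

open Set in
private lemma betaIoc {a : ℝ} (ha : 0 < a) :
    ∫ y in Ioc (0:ℝ) 1, y ^ (a-1) * Real.sqrt (1-y) =
      Real.Gamma a * Real.Gamma (3/2) / Real.Gamma (a+3/2) := by
  rw [← intervalIntegral.integral_of_le zero_le_one, ← realBeta ha (by norm_num : (0:ℝ) < 3/2)]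
  apply intervalIntegral.integral_congr
  intro x _
  simp only [Real.sqrt_eq_rpow]
  norm_num

open Set in
private lemma integral_g {a : ℝ} (ha : 0 < a) :
    ∫ x in Ioi (1:ℝ), Real.sqrt (x^2 - 1) * x ^ (-2*a - 2) =
      Real.Gamma a * Real.Gamma (3/2) / (2 * Real.Gamma (a+3/2)) := by
  have key := integral_comp_rpow_Ioi (fun y => y ^ (a-1) * Real.sqrt (1-y))
    (p := -2) (by norm_num)
  simp only [smul_eq_mul] at key
  have hinv : ∀ x : ℝ, 0 < x → x ^ (-2:ℝ) = (x^2)⁻¹ := by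
    intro x hx0
    rw [Real.rpow_neg hx0.le]
    norm_num [Real.rpow_natCast x 2]
  have hrhs : ∫ y in Ioi (0:ℝ), y ^ (a-1) * Real.sqrt (1-y) =
      ∫ y in Ioc (0:ℝ) 1, y ^ (a-1) * Real.sqrt (1-y) := by
    apply setIntegral_eq_of_subset_of_forall_diff_eq_zero measurableSet_Ioi Ioc_subset_Ioi_self
    intro y hy
    have h0 : (1:ℝ) - y ≤ 0 := by
      simp only [mem_diff, mem_Ioi, mem_Ioc, not_and, not_le] at hy
      linarith [hy.2 hy.1]
    rw [Real.sqrt_eq_zero'.mpr h0]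
    ring
  have hlhs : ∫ x in Ioi (0:ℝ), |(-2:ℝ)| * x ^ ((-2:ℝ)-1) * ((x ^ (-2:ℝ)) ^ (a-1) * Real.sqrt (1 - x ^ (-2:ℝ)))
      = ∫ x in Ioi (1:ℝ), 2 * (Real.sqrt (x^2 - 1) * x ^ (-2*a - 2)) := by
    rw [setIntegral_eq_of_subset_of_forall_diff_eq_zero measurableSet_Ioi
      (Ioi_subset_Ioi zero_le_one) ?_]
    · apply setIntegral_congr_fun measurableSet_Ioi
      intro x hx
      have hx1 : (1:ℝ) < x := hx
      have hx0 : (0:ℝ) < x := by linarith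
      have hsq : Real.sqrt (1 - x ^ (-2:ℝ)) = Real.sqrt (x^2-1) * x⁻¹ := by
        have h1 : 1 - x ^ (-2:ℝ) = (x^2 - 1) * (x^2)⁻¹ := by
          rw [hinv x hx0]; field_simp
        rw [h1, Real.sqrt_mul (by nlinarith), Real.sqrt_inv, Real.sqrt_sq hx0.le]
      have hpow : (x ^ (-2:ℝ)) ^ (a-1) = x ^ ((-2)*(a-1)) :=
        (Real.rpow_mul hx0.le (-2) (a-1)).symm
      have hcomb : x ^ ((-2:ℝ)-1) * (x ^ ((-2:ℝ)*(a-1)) * x⁻¹) = x ^ (-2*a-2) := by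
        rw [← Real.rpow_neg_one x, ← Real.rpow_add hx0, ← Real.rpow_add hx0]
        congr 1
        ring
      simp only []
      rw [show |(-2:ℝ)| = 2 by norm_num, hpow, hsq]
      calc 2 * x ^ ((-2:ℝ)-1) * (x ^ ((-2:ℝ)*(a-1)) * (Real.sqrt (x^2-1) * x⁻¹))
          = 2 * (Real.sqrt (x^2-1) * (x ^ ((-2:ℝ)-1) * (x ^ ((-2:ℝ)*(a-1)) * x⁻¹))) := by ring
        _ = 2 * (Real.sqrt (x^2-1) * x ^ (-2*a-2)) := by rw [hcomb]
    · intro x hx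
      simp only [mem_diff, mem_Ioi, not_lt] at hx
      have h2 : x^2 ≤ 1 := by nlinarith [hx.1, hx.2]
      have h3 : x^2 * (x^2)⁻¹ = 1 := mul_inv_cancel₀ (pow_ne_zero 2 hx.1.ne')
      have h4 : (1:ℝ) ≤ x ^ (-2:ℝ) := by
        rw [hinv x hx.1]
        nlinarith [inv_nonneg.mpr (sq_nonneg x)]
      rw [Real.sqrt_eq_zero'.mpr (by linarith)]
      ring
  rw [hlhs, hrhs, betaIoc ha, MeasureTheory.integral_const_mul] at key
  have hG : Real.Gamma (a + 3/2) ≠ 0 := (Real.Gamma_pos_of_pos (by linarith)).ne'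
  field_simp at key ⊢
  linarith

open Set in
private lemma integral_g' (n : ℕ) :
    ∫ x in Ioi (1:ℝ), Real.sqrt (x^2-1) * x ^ (-2*(n:ℝ) - 5/2) =
      Real.Gamma ((n:ℝ)+1/4) * Real.Gamma (3/2) / (2 * Real.Gamma ((n:ℝ)+7/4)) := by
  have h := integral_g (a := (n:ℝ)+1/4) (by positivity)
  rw [show -2*((n:ℝ)+1/4) - 2 = -2*(n:ℝ) - 5/2 by ring,
    show (n:ℝ)+1/4+3/2 = (n:ℝ)+7/4 by ring] at h
  exact h

open Set in
private lemma integrable_g {c : ℝ} (hc : c ≤ -5/2) :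
    IntegrableOn (fun x => Real.sqrt (x^2-1) * x ^ c) (Ioi (1:ℝ)) := by
  apply (integrableOn_Ioi_rpow_of_lt (show (-3/2:ℝ) < -1 by norm_num) zero_lt_one).mono'
  · exact ((by fun_prop : Measurable (fun x : ℝ => Real.sqrt (x^2-1) * x ^ c))).aestronglyMeasurable
  · rw [ae_restrict_iff' measurableSet_Ioi]
    refine ae_of_all _ fun x hx => ?_
    have hx1 : (1:ℝ) < x := hx
    have hx0 : (0:ℝ) < x := by linarith
    have hnn : 0 ≤ Real.sqrt (x^2-1) * x ^ c :=
      mul_nonneg (Real.sqrt_nonneg _) (Real.rpow_nonneg hx0.le _)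
    rw [Real.norm_eq_abs, abs_of_nonneg hnn]
    have h1 : Real.sqrt (x^2-1) ≤ x := by
      have h1' : Real.sqrt (x^2-1) ≤ Real.sqrt (x^2) := Real.sqrt_le_sqrt (by nlinarith)
      rwa [Real.sqrt_sq hx0.le] at h1'
    have h2 : x ^ c ≤ x ^ (-5/2:ℝ) := Real.rpow_le_rpow_of_exponent_le hx1.le hc
    calc Real.sqrt (x^2-1) * x ^ c ≤ x * x ^ (-5/2:ℝ) := by
          apply mul_le_mul h1 h2 (Real.rpow_nonneg hx0.le _) (by positivity)
      _ = x ^ (-3/2:ℝ) := by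
          rw [show x * x ^ (-5/2:ℝ) = x ^ (1:ℝ) * x ^ (-5/2:ℝ) by rw [Real.rpow_one],
            ← Real.rpow_add hx0]
          norm_num

private lemma coef_simp {p q c y : ℝ} (hq : q ≠ 0) (hc : c ≠ 0) :
    p * c / q * y / c = p / q * y := by
  field_simp

private lemma poch_pos {x : ℝ} (hx : 0 < x) (n : ℕ) : 0 < (ascPochhammer ℝ n).eval x := by
  induction n with
  | zero => simp
  | succ n ih =>
    rw [ascPochhammer_succ_right]
    simp only [Polynomial.eval_mul, Polynomial.eval_add, Polynomial.eval_X,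
      Polynomial.eval_natCast]
    positivity

private lemma poch_le {x y : ℝ} (hx : 0 < x) (hxy : x ≤ y) (n : ℕ) :
    (ascPochhammer ℝ n).eval x ≤ (ascPochhammer ℝ n).eval y := by
  induction n with
  | zero => simp
  | succ n ih =>
    rw [ascPochhammer_succ_right]
    simp only [Polynomial.eval_mul, Polynomial.eval_add, Polynomial.eval_X,
      Polynomial.eval_natCast]
    apply mul_le_mul ih (by linarith) (by positivity) (poch_pos (by linarith) n).le

private lemma Gamma_poch {x : ℝ} (hx : 0 < x) (n : ℕ) :
    Real.Gamma (x + n) = Real.Gamma x * (ascPochhammer ℝ n).eval x := by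
  induction n with
  | zero => simp
  | succ n ih =>
    have h1 : x + ((n:ℕ)+1:ℕ) = (x + n) + 1 := by push_cast; ring
    rw [h1, Real.Gamma_add_one (by positivity), ih, ascPochhammer_succ_right]
    simp only [Polynomial.eval_mul, Polynomial.eval_add, Polynomial.eval_X,
      Polynomial.eval_natCast]
    ring

/-- The Gauss hypergeometric function `₂F₁(a, b, c; x)`. -/
noncomputable def hyp2F1 (a b c x : ℝ) : ℝ :=
  ∑' n : ℕ, ((ascPochhammer ℝ n).eval a * (ascPochhammer ℝ n).eval b /
      (ascPochhammer ℝ n).eval c) * x ^ n / (n.factorial : ℝ)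

open Set in
/-- For `r ∈ (0,1)`, `∫₁^∞ (√r √(x²−1))/(√(1−r²) √x (x²−r²)) dx` converges and equals
`√π (√r/√(1−r²)) (Γ(5/4)/Γ(7/4)) ₂F₁(1/4,1,7/4;r²)`. -/
theorem stmt4 (r : ℝ) (hr : r ∈ Set.Ioo (0 : ℝ) 1) :
    IntegrableOn
        (fun x : ℝ => Real.sqrt r * Real.sqrt (x ^ 2 - 1) /
          (Real.sqrt (1 - r ^ 2) * Real.sqrt x * (x ^ 2 - r ^ 2))) (Set.Ioi 1) ∧
      ∫ x in Set.Ioi (1 : ℝ), Real.sqrt r * Real.sqrt (x ^ 2 - 1) /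
          (Real.sqrt (1 - r ^ 2) * Real.sqrt x * (x ^ 2 - r ^ 2)) =
        Real.sqrt Real.pi * (Real.sqrt r / Real.sqrt (1 - r ^ 2)) *
          (Real.Gamma (5 / 4) / Real.Gamma (7 / 4)) * hyp2F1 (1 / 4) 1 (7 / 4) (r ^ 2) := by
  obtain ⟨hr0, hr1⟩ := hr
  have hr2 : r^2 < 1 := by nlinarith
  have hr2' : (0:ℝ) < 1 - r^2 := by linarith
  -- F is the main function; the integrand is (√r/√(1-r²)) * F
  set F : ℝ → ℝ := fun x => Real.sqrt (x^2-1) / (Real.sqrt x * (x^2 - r^2)) with hF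
  have hsplit : ∀ x : ℝ, Real.sqrt r * Real.sqrt (x ^ 2 - 1) /
      (Real.sqrt (1 - r ^ 2) * Real.sqrt x * (x ^ 2 - r ^ 2)) =
      (Real.sqrt r / Real.sqrt (1 - r^2)) * F x := by
    intro x
    rw [hF]
    simp only []
    rw [div_mul_div_comm]
    ring_nf
  -- integrability of F
  have hFint : IntegrableOn F (Ioi (1:ℝ)) := by
    apply ((integrableOn_Ioi_rpow_of_lt (show (-3/2:ℝ) < -1 by norm_num)
      zero_lt_one).const_mul ((1 - r^2)⁻¹)).mono'
    · exact ((by fun_prop : Measurable F)).aestronglyMeasurable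
    · rw [ae_restrict_iff' measurableSet_Ioi]
      refine ae_of_all _ fun x hx => ?_
      have hx1 : (1:ℝ) < x := hx
      have hx0 : (0:ℝ) < x := by linarith
      have hden : 0 < Real.sqrt x * (x^2 - r^2) := by
        apply mul_pos (Real.sqrt_pos.mpr hx0)
        nlinarith
      have hnn : 0 ≤ F x := div_nonneg (Real.sqrt_nonneg _) hden.le
      rw [Real.norm_eq_abs, abs_of_nonneg hnn]
      have hnum : Real.sqrt (x^2-1) ≤ x := by
        have h1' : Real.sqrt (x^2-1) ≤ Real.sqrt (x^2) := Real.sqrt_le_sqrt (by nlinarith)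
        rwa [Real.sqrt_sq hx0.le] at h1'
      have hx52 : x ^ ((5:ℝ)/2) = Real.sqrt x * x^2 := by
        rw [Real.sqrt_eq_rpow, ← Real.rpow_natCast x 2, ← Real.rpow_add hx0]
        norm_num
      have hdlb : (1 - r^2) * x ^ ((5:ℝ)/2) ≤ Real.sqrt x * (x^2 - r^2) := by
        rw [hx52]
        have hs : 0 < Real.sqrt x := Real.sqrt_pos.mpr hx0
        have hh : 0 ≤ r^2 * (x^2 - 1) := mul_nonneg (sq_nonneg r) (by nlinarith)
        have : (1 - r^2) * x^2 ≤ x^2 - r^2 := by nlinarith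
        nlinarith [hs.le]
      calc F x ≤ x / ((1 - r^2) * x ^ ((5:ℝ)/2)) :=
            div_le_div₀ hx0.le hnum (by positivity) hdlb
        _ = (1 - r^2)⁻¹ * x ^ (-3/2:ℝ) := by
            have hxm : x ^ ((5:ℝ)/2) ≠ 0 := by positivity
            have hcomb : x ^ (-3/2:ℝ) = x / x ^ ((5:ℝ)/2) := by
              rw [eq_div_iff hxm, ← Real.rpow_add hx0]
              norm_num
            rw [hcomb]
            field_simp
  -- the summands
  set f : ℕ → ℝ → ℝ :=
    fun n x => (r^2)^n * (Real.sqrt (x^2-1) * x ^ (-2*(n:ℝ) - 5/2)) with hf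
  have hfint : ∀ n, IntegrableOn (f n) (Ioi (1:ℝ)) := fun n =>
    (integrable_g (c := -2*(n:ℝ) - 5/2) (by
      have : (0:ℝ) ≤ (n:ℝ) := Nat.cast_nonneg n
      linarith)).const_mul _
  have hfmeas : ∀ n, AEStronglyMeasurable (f n) (volume.restrict (Ioi 1)) := fun n =>
    ((by fun_prop : Measurable (f n))).aestronglyMeasurable
  have hfnn : ∀ n, 0 ≤ᵐ[volume.restrict (Ioi 1)] f n := by
    intro n
    filter_upwards [ae_restrict_mem measurableSet_Ioi] with x hx
    simp only [Pi.zero_apply]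
    have hx0 : (0:ℝ) < x := lt_trans zero_lt_one hx
    have := Real.rpow_nonneg hx0.le (-2*(n:ℝ) - 5/2)
    positivity
  -- value of each integral
  have hJ : ∀ n : ℕ, ∫ x in Ioi (1:ℝ), f n x =
      (r^2)^n * (Real.Gamma ((n:ℝ)+1/4) * Real.Gamma (3/2) / (2 * Real.Gamma ((n:ℝ)+7/4))) := by
    intro n
    rw [hf]
    simp only []
    rw [MeasureTheory.integral_const_mul, integral_g' n]
  -- Pochhammer form of the coefficients
  set P : ℕ → ℝ := fun n => (ascPochhammer ℝ n).eval (1/4) with hP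
  set Q : ℕ → ℝ := fun n => (ascPochhammer ℝ n).eval (7/4) with hQ
  have hPpos : ∀ n, 0 < P n := fun n => poch_pos (by norm_num) n
  have hQpos : ∀ n, 0 < Q n := fun n => poch_pos (by norm_num) n
  have hPQ : ∀ n, P n ≤ Q n := fun n => poch_le (by norm_num) (by norm_num) n
  have hG14 : Real.Gamma ((1:ℝ)/4) ≠ 0 := (Real.Gamma_pos_of_pos (by norm_num)).ne'
  have hG74 : (0:ℝ) < Real.Gamma (7/4) := Real.Gamma_pos_of_pos (by norm_num)
  set K : ℝ := Real.Gamma (1/4) * Real.Gamma (3/2) / (2 * Real.Gamma (7/4)) with hK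
  have hcoef : ∀ n : ℕ,
      (r^2)^n * (Real.Gamma ((n:ℝ)+1/4) * Real.Gamma (3/2) / (2 * Real.Gamma ((n:ℝ)+7/4))) =
      K * (P n / Q n * (r^2)^n) := by
    intro n
    have e1 : Real.Gamma ((n:ℝ)+1/4) = Real.Gamma (1/4) * P n := by
      rw [show ((n:ℝ)+1/4) = 1/4 + n by ring]
      exact Gamma_poch (by norm_num) n
    have e2 : Real.Gamma ((n:ℝ)+7/4) = Real.Gamma (7/4) * Q n := by
      rw [show ((n:ℝ)+7/4) = 7/4 + n by ring]
      exact Gamma_poch (by norm_num) n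
    rw [e1, e2, hK]
    have := (hQpos n).ne'
    field_simp
  -- summability
  have hterm_nonneg : ∀ n : ℕ, 0 ≤ K * (P n / Q n * (r^2)^n) := by
    intro n
    have := (hPpos n).le
    have := (hQpos n).le
    have hKpos : 0 < K := by
      rw [hK]
      have := Real.Gamma_pos_of_pos (show (0:ℝ) < 1/4 by norm_num)
      have := Real.Gamma_pos_of_pos (show (0:ℝ) < 3/2 by norm_num)
      positivity
    positivity
  have hKpos : 0 < K := by
    rw [hK]
    have := Real.Gamma_pos_of_pos (show (0:ℝ) < 1/4 by norm_num)
    have := Real.Gamma_pos_of_pos (show (0:ℝ) < 3/2 by norm_num)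
    positivity
  have hsum : Summable (fun n : ℕ => K * (P n / Q n * (r^2)^n)) := by
    apply Summable.of_nonneg_of_le hterm_nonneg (g := fun n => K * (P n / Q n * (r^2)^n))
      (f := fun n => K * (r^2)^n)
    · intro n
      have h1 : P n / Q n ≤ 1 := (div_le_one (hQpos n)).mpr (hPQ n)
      have h2 : (0:ℝ) ≤ (r^2)^n := by positivity
      have : P n / Q n * (r^2)^n ≤ 1 * (r^2)^n :=
        mul_le_mul_of_nonneg_right h1 h2
      nlinarith [hKpos.le]
    · exact (summable_geometric_of_lt_one (by positivity) hr2).mul_left K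
  -- pointwise series identity
  have hFsum : ∀ x ∈ Ioi (1:ℝ), F x = ∑' n : ℕ, f n x := by
    intro x hx
    have hx1 : (1:ℝ) < x := hx
    have hx0 : (0:ℝ) < x := by linarith
    have hx2 : (0:ℝ) < x^2 := by positivity
    have hq0 : (0:ℝ) ≤ r^2 * (x^2)⁻¹ := by positivity
    have hq1 : r^2 * (x^2)⁻¹ < 1 := by
      rw [mul_inv_lt_iff₀ hx2]
      nlinarith
    have hterm : ∀ n : ℕ, f n x =
        (Real.sqrt (x^2-1) * x ^ (-5/2:ℝ)) * (r^2 * (x^2)⁻¹)^n := by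
      intro n
      rw [hf]
      simp only []
      have hxp : x ^ (-2*(n:ℝ) - 5/2) = ((x^2)⁻¹)^n * x ^ (-5/2:ℝ) := by
        rw [show -2*(n:ℝ) - 5/2 = (-2)*(n:ℝ) + (-5/2) by ring, Real.rpow_add hx0]
        congr 1
        rw [show ((x^2)⁻¹ : ℝ) = x ^ (-2:ℝ) by
            rw [Real.rpow_neg hx0.le]; norm_num [Real.rpow_natCast x 2],
          ← Real.rpow_natCast (x ^ (-2:ℝ)) n, ← Real.rpow_mul hx0.le]
      rw [hxp, mul_pow]
      ring
    rw [tsum_congr hterm, tsum_mul_left, tsum_geometric_of_lt_one hq0 hq1]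
    rw [hF]
    simp only []
    have hs : (0:ℝ) < Real.sqrt x := Real.sqrt_pos.mpr hx0
    have hxr : (0:ℝ) < x^2 - r^2 := by nlinarith
    have h1mq : 1 - r^2 * (x^2)⁻¹ = (x^2 - r^2) * (x^2)⁻¹ := by field_simp
    have hx52 : x ^ (-(5:ℝ)/2) = (Real.sqrt x * x^2)⁻¹ := by
      rw [Real.sqrt_eq_rpow, ← Real.rpow_natCast x 2, ← Real.rpow_add hx0, ← Real.rpow_neg hx0.le]
      norm_num
    rw [show (-5/2:ℝ) = -(5:ℝ)/2 by norm_num, hx52, h1mq]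
    rw [mul_inv (x^2 - r^2) ((x^2)⁻¹), inv_inv]
    field_simp
  -- interchange sum and integral
  have hlint : ∀ n : ℕ, ∫⁻ x in Ioi (1:ℝ), ‖f n x‖₊ =
      ENNReal.ofReal (∫ x in Ioi (1:ℝ), f n x) := by
    intro n
    rw [ofReal_integral_eq_lintegral_ofReal (hfint n) (hfnn n)]
    apply lintegral_congr_ae
    filter_upwards [hfnn n] with x hx
    rw [← enorm_eq_nnnorm, Real.enorm_eq_ofReal hx]
  have hfin : ∑' n : ℕ, ∫⁻ x in Ioi (1:ℝ), ‖f n x‖₊ ≠ ⊤ := by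
    rw [tsum_congr hlint]
    have : ∀ n : ℕ, ∫ x in Ioi (1:ℝ), f n x = K * (P n / Q n * (r^2)^n) := by
      intro n
      rw [hJ n, hcoef n]
    rw [tsum_congr (fun n => by rw [this n])]
    rw [← ENNReal.ofReal_tsum_of_nonneg hterm_nonneg hsum]
    exact ENNReal.ofReal_ne_top
  have hIF : ∫ x in Ioi (1:ℝ), F x = ∑' n : ℕ, K * (P n / Q n * (r^2)^n) := by
    rw [setIntegral_congr_fun measurableSet_Ioi hFsum,
      MeasureTheory.integral_tsum hfmeas hfin]
    exact tsum_congr fun n => by rw [hJ n, hcoef n]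
  -- hypergeometric identification
  have hhyp : hyp2F1 (1/4) 1 (7/4) (r^2) = ∑' n : ℕ, P n / Q n * (r^2)^n := by
    unfold hyp2F1
    apply tsum_congr
    intro n
    rw [ascPochhammer_eval_one]
    exact coef_simp (hQpos n).ne' (Nat.cast_ne_zero.mpr n.factorial_ne_zero)
  -- K in terms of Γ(5/4)
  have hKval : K = Real.sqrt Real.pi * (Real.Gamma (5/4) / Real.Gamma (7/4)) := by
    have h32 : Real.Gamma (3/2) = Real.sqrt Real.pi / 2 := by
      rw [show (3/2:ℝ) = 1/2 + 1 by norm_num, Real.Gamma_add_one (by norm_num),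
        Real.Gamma_one_half_eq]
      ring
    have h54 : Real.Gamma (5/4) = Real.Gamma (1/4) / 4 := by
      rw [show (5/4:ℝ) = 1/4 + 1 by norm_num, Real.Gamma_add_one (by norm_num)]
      ring
    rw [hK, h32, h54]
    field_simp
    ring
  constructor
  · have : (fun x : ℝ => Real.sqrt r * Real.sqrt (x ^ 2 - 1) /
        (Real.sqrt (1 - r ^ 2) * Real.sqrt x * (x ^ 2 - r ^ 2))) =
        fun x => (Real.sqrt r / Real.sqrt (1 - r^2)) * F x := funext hsplit
    rw [this]
    exact hFint.const_mul _
  · rw [setIntegral_congr_fun measurableSet_Ioi (fun x _ => hsplit x),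
      MeasureTheory.integral_const_mul, hIF, tsum_mul_left, hhyp, hKval]
    ring
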